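/- Let f : 2^[n] → ℝ be submodular and let F : [0,1]^n → ℝ be its multilinear extension, F(y) = E[f(ŷ)] where ŷ includes coordinate i independently with probability yᵢ. Then the univariate function h'(p) = F(p, p, …, p) is concave on [0,1]. -/

import Mathlib

open Finset

namespace Stmt13Aux

/-- second derivative coefficient for a set of size `k`. -/
noncomputable def D2 (n k : ℕ) (p : ℝ) : ℝ :=
  (k : ℝ) * ((k - 1 : ℕ) : ℝ) * p ^ (k - 2) * (1 - p) ^ (n - k)
    - 2 * (k : ℝ) * ((n - k : ℕ) : ℝ) * p ^ (k - 1) * (1 - p) ^ (n - k - 1)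
    + ((n - k : ℕ) : ℝ) * ((n - k - 1 : ℕ) : ℝ) * p ^ k * (1 - p) ^ (n - k - 2)

/-- first derivative coefficient. -/
noncomputable def D1 (n k : ℕ) (p : ℝ) : ℝ :=
  (k : ℝ) * p ^ (k - 1) * (1 - p) ^ (n - k) - ((n - k : ℕ) : ℝ) * p ^ k * (1 - p) ^ (n - k - 1)

lemma hasDerivAt_term (c : ℝ) (k m : ℕ) (p : ℝ) :
    HasDerivAt (fun x : ℝ => c * x ^ k * (1 - x) ^ m)
      (c * ((k : ℝ) * p ^ (k - 1) * (1 - p) ^ m - (m : ℝ) * p ^ k * (1 - p) ^ (m - 1))) p := by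
  have h1 : HasDerivAt (fun x : ℝ => c * x ^ k) (c * ((k : ℝ) * p ^ (k - 1))) p :=
    (hasDerivAt_pow k p).const_mul c
  have h2 : HasDerivAt (fun x : ℝ => (1 - x) ^ m) ((m : ℝ) * (1 - p) ^ (m - 1) * (-1)) p :=
    ((hasDerivAt_id p).const_sub 1).pow m
  refine (h1.mul h2).congr_deriv ?_
  ring

lemma hasDerivAt_D1 (c : ℝ) (n k : ℕ) (p : ℝ) :
    HasDerivAt (fun x : ℝ => c * D1 n k x) (c * D2 n k p) p := by
  have hA := hasDerivAt_term (c * (k : ℝ)) (k - 1) (n - k) p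
  have hB := hasDerivAt_term (c * ((n - k : ℕ) : ℝ)) k (n - k - 1) p
  have hfun : (fun x : ℝ => c * D1 n k x) =
      fun x : ℝ => c * (k : ℝ) * x ^ (k - 1) * (1 - x) ^ (n - k)
        - c * ((n - k : ℕ) : ℝ) * x ^ k * (1 - x) ^ (n - k - 1) := by
    funext x; simp only [D1]; ring
  rw [hfun]
  refine (hA.sub hB).congr_deriv ?_
  have e1 : k - 1 - 1 = k - 2 := by omega
  have e2 : n - k - 1 - 1 = n - k - 2 := by omega
  rw [e1, e2, D2]
  ring

/-- the polynomial `h'`. -/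
noncomputable def G (n : ℕ) (f : Finset (Fin n) → ℝ) (p : ℝ) : ℝ :=
  ∑ S : Finset (Fin n), f S * p ^ S.card * (1 - p) ^ (n - S.card)

noncomputable def G1 (n : ℕ) (f : Finset (Fin n) → ℝ) (p : ℝ) : ℝ :=
  ∑ S : Finset (Fin n), f S * D1 n S.card p

noncomputable def G2 (n : ℕ) (f : Finset (Fin n) → ℝ) (p : ℝ) : ℝ :=
  ∑ S : Finset (Fin n), f S * D2 n S.card p

lemma hasDerivAt_G (n : ℕ) (f : Finset (Fin n) → ℝ) (p : ℝ) :
    HasDerivAt (G n f) (G1 n f p) p := by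
  apply HasDerivAt.fun_sum
  intro S _
  have := hasDerivAt_term (f S) S.card (n - S.card) p
  simpa [D1] using this

lemma hasDerivAt_G1 (n : ℕ) (f : Finset (Fin n) → ℝ) (p : ℝ) :
    HasDerivAt (G1 n f) (G2 n f p) p := by
  apply HasDerivAt.fun_sum
  intro S _
  exact hasDerivAt_D1 (f S) n S.card p

variable {n : ℕ}


lemma insert2_erase (i j : Fin n) (hij : i ≠ j) (S : Finset (Fin n)) (h1 : i ∈ S) (h2 : j ∈ S) :
    insert i (insert j ((S.erase i).erase j)) = S := by
  rw [Finset.insert_erase (Finset.mem_erase.2 ⟨hij.symm, h2⟩), Finset.insert_erase h1]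

lemma sum_insert2 (i j : Fin n) (hij : i ≠ j) (g : Finset (Fin n) → ℝ) :
    ∑ S ∈ univ.filter (fun S : Finset (Fin n) => i ∈ S ∧ j ∈ S), g S
      = ∑ T ∈ univ.filter (fun T : Finset (Fin n) => i ∉ T ∧ j ∉ T), g (insert i (insert j T)) := by
  refine sum_nbij' (fun S => (S.erase i).erase j) (fun T => insert i (insert j T)) ?_ ?_ ?_ ?_ ?_
  · intro S hS
    simp only [mem_filter, mem_univ, true_and] at hS ⊢
    simp [Finset.mem_erase]
  · intro T hT
    simp only [mem_filter, mem_univ, true_and] at hT ⊢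
    simp [Finset.mem_insert, hij, hij.symm]
  · intro S hS
    simp only [mem_filter, mem_univ, true_and] at hS
    exact insert2_erase i j hij S hS.1 hS.2
  · intro T hT
    simp only [mem_filter, mem_univ, true_and] at hT
    show ((insert i (insert j T)).erase i).erase j = T
    rw [Finset.erase_insert (by simp [Finset.mem_insert, hij, hT.1]),
      Finset.erase_insert hT.2]
  · intro S hS
    simp only [mem_filter, mem_univ, true_and] at hS
    show g S = g (insert i (insert j ((S.erase i).erase j)))
    rw [insert2_erase i j hij S hS.1 hS.2]

lemma sum_insert1 (i j : Fin n) (hij : i ≠ j) (g : Finset (Fin n) → ℝ) :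
    ∑ S ∈ univ.filter (fun S : Finset (Fin n) => i ∈ S ∧ j ∉ S), g S
      = ∑ T ∈ univ.filter (fun T : Finset (Fin n) => i ∉ T ∧ j ∉ T), g (insert i T) := by
  refine sum_nbij' (fun S => S.erase i) (fun T => insert i T) ?_ ?_ ?_ ?_ ?_
  · intro S hS
    simp only [mem_filter, mem_univ, true_and] at hS ⊢
    exact ⟨Finset.notMem_erase i S, fun h => hS.2 (Finset.mem_of_mem_erase h)⟩
  · intro T hT
    simp only [mem_filter, mem_univ, true_and] at hT ⊢
    simp [Finset.mem_insert, hij.symm, hT.2]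
  · intro S hS
    simp only [mem_filter, mem_univ, true_and] at hS
    exact Finset.insert_erase hS.1
  · intro T hT
    simp only [mem_filter, mem_univ, true_and] at hT
    exact Finset.erase_insert hT.1
  · intro S hS
    simp only [mem_filter, mem_univ, true_and] at hS
    show g S = g (insert i (S.erase i))
    rw [Finset.insert_erase hS.1]



lemma pair_inner (f : Finset (Fin n) → ℝ) (p : ℝ) (i j : Fin n) (hij : i ≠ j) :
    ∑ T ∈ univ.filter (fun T : Finset (Fin n) => i ∉ T ∧ j ∉ T),
      p ^ T.card * (1 - p) ^ (n - 2 - T.card) *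
        (f (insert i (insert j T)) - f (insert i T) - f (insert j T) + f T)
    = (∑ S ∈ univ.filter (fun S : Finset (Fin n) => i ∈ S ∧ j ∈ S),
        f S * (p ^ (S.card - 2) * (1 - p) ^ (n - S.card)))
      - (∑ S ∈ univ.filter (fun S : Finset (Fin n) => i ∈ S ∧ j ∉ S),
        f S * (p ^ (S.card - 1) * (1 - p) ^ (n - S.card - 1)))
      - (∑ S ∈ univ.filter (fun S : Finset (Fin n) => i ∉ S ∧ j ∈ S),
        f S * (p ^ (S.card - 1) * (1 - p) ^ (n - S.card - 1)))
      + ∑ S ∈ univ.filter (fun S : Finset (Fin n) => i ∉ S ∧ j ∉ S),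
        f S * (p ^ S.card * (1 - p) ^ (n - S.card - 2)) := by
  have hswapS : (univ.filter (fun S : Finset (Fin n) => i ∉ S ∧ j ∈ S))
      = univ.filter (fun S : Finset (Fin n) => j ∈ S ∧ i ∉ S) := by
    ext S; simp [and_comm]
  have hswapT : (univ.filter (fun T : Finset (Fin n) => j ∉ T ∧ i ∉ T))
      = univ.filter (fun T : Finset (Fin n) => i ∉ T ∧ j ∉ T) := by
    ext T; simp [and_comm]
  rw [sum_insert2 i j hij, sum_insert1 i j hij, hswapS, sum_insert1 j i hij.symm, hswapT,
    ← sum_sub_distrib, ← sum_sub_distrib, ← sum_add_distrib]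
  apply sum_congr rfl
  intro T hT
  simp only [mem_filter, mem_univ, true_and] at hT
  obtain ⟨hiT, hjT⟩ := hT
  have hijT : i ∉ insert j T := by simp [Finset.mem_insert, hij, hiT]
  have hcA : (insert i (insert j T)).card = T.card + 2 := by
    rw [Finset.card_insert_of_notMem hijT, Finset.card_insert_of_notMem hjT]
  have hcI : (insert i T).card = T.card + 1 := Finset.card_insert_of_notMem hiT
  have hcJ : (insert j T).card = T.card + 1 := Finset.card_insert_of_notMem hjT
  rw [hcA, hcI, hcJ]
  have e1 : T.card + 2 - 2 = T.card := by omega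
  have e2 : n - (T.card + 2) = n - 2 - T.card := by omega
  have e3 : T.card + 1 - 1 = T.card := by omega
  have e4 : n - (T.card + 1) - 1 = n - 2 - T.card := by omega
  have e5 : n - T.card - 2 = n - 2 - T.card := by omega
  rw [e1, e2, e3, e4, e5]
  ring



lemma aux_mul (m : ℕ) : m * m - m = m * (m - 1) := by
  cases m with
  | zero => rfl
  | succ t => rw [Nat.mul_succ, Nat.add_sub_cancel, Nat.succ_sub_one]

lemma identity (f : Finset (Fin n) → ℝ) (p : ℝ) :
    ∑ x ∈ (univ : Finset (Fin n)).offDiag,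
      ∑ T ∈ univ.filter (fun T : Finset (Fin n) => x.1 ∉ T ∧ x.2 ∉ T),
        p ^ T.card * (1 - p) ^ (n - 2 - T.card) *
          (f (insert x.1 (insert x.2 T)) - f (insert x.1 T) - f (insert x.2 T) + f T)
    = G2 n f p := by
  have step1 : ∀ x ∈ (univ : Finset (Fin n)).offDiag,
      (∑ T ∈ univ.filter (fun T : Finset (Fin n) => x.1 ∉ T ∧ x.2 ∉ T),
        p ^ T.card * (1 - p) ^ (n - 2 - T.card) *
          (f (insert x.1 (insert x.2 T)) - f (insert x.1 T) - f (insert x.2 T) + f T))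
      = ∑ S : Finset (Fin n),
          ((if x.1 ∈ S ∧ x.2 ∈ S then f S * (p ^ (S.card - 2) * (1 - p) ^ (n - S.card)) else 0)
          - (if x.1 ∈ S ∧ x.2 ∉ S then
              f S * (p ^ (S.card - 1) * (1 - p) ^ (n - S.card - 1)) else 0)
          - (if x.1 ∉ S ∧ x.2 ∈ S then
              f S * (p ^ (S.card - 1) * (1 - p) ^ (n - S.card - 1)) else 0)
          + (if x.1 ∉ S ∧ x.2 ∉ S then
              f S * (p ^ S.card * (1 - p) ^ (n - S.card - 2)) else 0)) := by
    intro x hx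
    have hij : x.1 ≠ x.2 := (Finset.mem_offDiag.1 hx).2.2
    rw [pair_inner f p x.1 x.2 hij, sum_filter, sum_filter, sum_filter, sum_filter,
      ← sum_sub_distrib, ← sum_sub_distrib, ← sum_add_distrib]
  rw [sum_congr rfl step1, Finset.sum_comm]
  apply sum_congr rfl
  intro S _
  have hk : S.card ≤ n := by
    simpa using Finset.card_le_univ S
  have hcompl : Sᶜ.card = n - S.card := by
    rw [Finset.card_compl, Fintype.card_fin]
  have hf11 : (univ : Finset (Fin n)).offDiag.filter
      (fun x : Fin n × Fin n => x.1 ∈ S ∧ x.2 ∈ S) = S.offDiag := by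
    ext ⟨a, b⟩
    simp only [Finset.mem_filter, Finset.mem_offDiag, Finset.mem_univ, true_and]
    tauto
  have hf10 : (univ : Finset (Fin n)).offDiag.filter
      (fun x : Fin n × Fin n => x.1 ∈ S ∧ x.2 ∉ S) = S ×ˢ Sᶜ := by
    ext ⟨a, b⟩
    simp only [Finset.mem_filter, Finset.mem_offDiag, Finset.mem_univ, true_and,
      Finset.mem_product, Finset.mem_compl]
    constructor
    · rintro ⟨h1, h2⟩; exact h2
    · rintro ⟨h1, h2⟩; exact ⟨fun h => h2 (h ▸ h1), h1, h2⟩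
  have hf01 : (univ : Finset (Fin n)).offDiag.filter
      (fun x : Fin n × Fin n => x.1 ∉ S ∧ x.2 ∈ S) = Sᶜ ×ˢ S := by
    ext ⟨a, b⟩
    simp only [Finset.mem_filter, Finset.mem_offDiag, Finset.mem_univ, true_and,
      Finset.mem_product, Finset.mem_compl]
    constructor
    · rintro ⟨h1, h2⟩; exact h2
    · rintro ⟨h1, h2⟩; exact ⟨fun h => h1 (by rw [h]; exact h2), h1, h2⟩
  have hf00 : (univ : Finset (Fin n)).offDiag.filter
      (fun x : Fin n × Fin n => x.1 ∉ S ∧ x.2 ∉ S) = Sᶜ.offDiag := by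
    ext ⟨a, b⟩
    simp only [Finset.mem_filter, Finset.mem_offDiag, Finset.mem_univ, true_and,
      Finset.mem_compl]
    tauto
  rw [sum_add_distrib, sum_sub_distrib, sum_sub_distrib,
    ← Finset.sum_filter, ← Finset.sum_filter, ← Finset.sum_filter, ← Finset.sum_filter,
    hf11, hf10, hf01, hf00, Finset.sum_const, Finset.sum_const, Finset.sum_const,
    Finset.sum_const, Finset.offDiag_card, Finset.offDiag_card, Finset.card_product,
    Finset.card_product, hcompl, aux_mul, aux_mul, nsmul_eq_mul, nsmul_eq_mul,
    nsmul_eq_mul, nsmul_eq_mul, D2]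
  push_cast
  ring



lemma pairSum_nonpos (f : Finset (Fin n) → ℝ)
    (hsub : ∀ A B : Finset (Fin n), f (A ∪ B) + f (A ∩ B) ≤ f A + f B)
    (p : ℝ) (hp0 : 0 ≤ p) (hp1 : p ≤ 1) :
    (∑ x ∈ (univ : Finset (Fin n)).offDiag,
      ∑ T ∈ univ.filter (fun T : Finset (Fin n) => x.1 ∉ T ∧ x.2 ∉ T),
        p ^ T.card * (1 - p) ^ (n - 2 - T.card) *
          (f (insert x.1 (insert x.2 T)) - f (insert x.1 T) - f (insert x.2 T) + f T)) ≤ 0 := by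
  apply Finset.sum_nonpos
  intro x hx
  have hij : x.1 ≠ x.2 := (Finset.mem_offDiag.1 hx).2.2
  apply Finset.sum_nonpos
  intro T hT
  simp only [mem_filter, mem_univ, true_and] at hT
  obtain ⟨h1, h2⟩ := hT
  have hw : 0 ≤ p ^ T.card * (1 - p) ^ (n - 2 - T.card) :=
    mul_nonneg (pow_nonneg hp0 _) (pow_nonneg (by linarith) _)
  have hunion : insert x.1 T ∪ insert x.2 T = insert x.1 (insert x.2 T) := by
    ext a
    simp only [Finset.mem_union, Finset.mem_insert]
    tauto
  have hinter : insert x.1 T ∩ insert x.2 T = T := by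
    ext a
    simp only [Finset.mem_inter, Finset.mem_insert]
    constructor
    · rintro ⟨rfl | ha, hb⟩
      · rcases hb with heq | hb
        · exact absurd heq hij
        · exact hb
      · exact ha
    · intro ha
      exact ⟨Or.inr ha, Or.inr ha⟩
  have hs := hsub (insert x.1 T) (insert x.2 T)
  rw [hunion, hinter] at hs
  apply mul_nonpos_of_nonneg_of_nonpos hw
  linarith


end Stmt13Aux

theorem stmt_13 (n : ℕ) (f : Finset (Fin n) → ℝ)
    (hsub : ∀ A B : Finset (Fin n), f (A ∪ B) + f (A ∩ B) ≤ f A + f B)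
    (h' : ℝ → ℝ)
    (hh' : ∀ p : ℝ, h' p = ∑ S : Finset (Fin n), f S * p ^ S.card * (1 - p) ^ (n - S.card)) :
    ConcaveOn ℝ (Set.Icc (0 : ℝ) 1) h' := by
  have hfun : h' = Stmt13Aux.G n f := funext fun p => (hh' p).trans rfl
  rw [hfun]
  apply concaveOn_of_hasDerivWithinAt2_nonpos (convex_Icc (0 : ℝ) 1)
    (f' := Stmt13Aux.G1 n f) (f'' := Stmt13Aux.G2 n f)
  · exact (Differentiable.continuous fun x =>
      (Stmt13Aux.hasDerivAt_G n f x).differentiableAt).continuousOn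
  · intro x _
    exact (Stmt13Aux.hasDerivAt_G n f x).hasDerivWithinAt
  · intro x _
    exact (Stmt13Aux.hasDerivAt_G1 n f x).hasDerivWithinAt
  · intro x hx
    rw [interior_Icc, Set.mem_Ioo] at hx
    rw [← Stmt13Aux.identity f x]
    exact Stmt13Aux.pairSum_nonpos f hsub x hx.1.le hx.2.le
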